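/- Suppose that on every I-fiber the pointwise optimal-action set is a constant singleton: for every state s there is an action a_s such that Opt(t) = {a_s} for every state t agreeing with s on I. Then for every probability mass function P and every state s whose I-fiber contains a positive-probability state, OptS_I(s) = {a_s} = Opt(s); in particular, if every I-fiber contains a positive-probability state then I is stochastically sufficient. -/
import Mathlib


/-- Full-information optimizer: actions maximizing pointwise utility at state `s`. -/
def Opt {n : ℕ} {A : Type*} {X : Fin n → Type*}
    (U : A → (∀ i, X i) → ℝ) (s : ∀ i, X i) : Set A :=
  {a | ∀ b, U b s ≤ U a s}

/-- Conditional (unnormalized) expected utility of action `a` over the `I`-fiber of `s`. -/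
noncomputable def condEU {n : ℕ} {A : Type*} {X : Fin n → Type*}
    [∀ i, Fintype (X i)] [∀ i, DecidableEq (X i)]
    (U : A → (∀ i, X i) → ℝ) (P : (∀ i, X i) → ℝ)
    (I : Finset (Fin n)) (s : ∀ i, X i) (a : A) : ℝ :=
  ∑ t ∈ Finset.univ.filter (fun t : ∀ i, X i => ∀ i ∈ I, t i = s i), P t * U a t

/-- Conditional optimizer: actions maximizing conditional expected utility on the `I`-fiber. -/
noncomputable def OptS {n : ℕ} {A : Type*} {X : Fin n → Type*}
    [∀ i, Fintype (X i)] [∀ i, DecidableEq (X i)]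
    (U : A → (∀ i, X i) → ℝ) (P : (∀ i, X i) → ℝ)
    (I : Finset (Fin n)) (s : ∀ i, X i) : Set A :=
  {a | ∀ b, condEU U P I s b ≤ condEU U P I s a}

/-- `I` is statically sufficient: states agreeing on `I` have the same optimizer. -/
def StaticSufficient {n : ℕ} {A : Type*} {X : Fin n → Type*}
    (U : A → (∀ i, X i) → ℝ) (I : Finset (Fin n)) : Prop :=
  ∀ s t : ∀ i, X i, (∀ i ∈ I, s i = t i) → Opt U s = Opt U t

/-- `I` is stochastically sufficient: the conditional optimizer agrees with the
full-information optimizer at every state. -/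
def StochSufficient {n : ℕ} {A : Type*} {X : Fin n → Type*}
    [∀ i, Fintype (X i)] [∀ i, DecidableEq (X i)]
    (U : A → (∀ i, X i) → ℝ) (P : (∀ i, X i) → ℝ) (I : Finset (Fin n)) : Prop :=
  ∀ s : ∀ i, X i, OptS U P I s = Opt U s

/-- `I` is stochastically decisive: every positive-probability state's observed fiber
has a unique conditional optimal action. -/
def StochDecisive {n : ℕ} {A : Type*} {X : Fin n → Type*}
    [∀ i, Fintype (X i)] [∀ i, DecidableEq (X i)]
    (U : A → (∀ i, X i) → ℝ) (P : (∀ i, X i) → ℝ) (I : Finset (Fin n)) : Prop :=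
  ∀ s : ∀ i, X i, 0 < P s → ∃ a : A, OptS U P I s = {a}

theorem singleton_static_optimum_transfers_to_stochastic
    {n : ℕ} {A : Type*} {X : Fin n → Type*}
    [Fintype A] [Nonempty A] [∀ i, Fintype (X i)] [∀ i, Nonempty (X i)]
    [∀ i, DecidableEq (X i)]
    (U : A → (∀ i, X i) → ℝ)
    (I : Finset (Fin n))
    (hsing : ∀ s : ∀ i, X i, ∃ a : A,
        ∀ t : ∀ i, X i, (∀ i ∈ I, t i = s i) → Opt U t = {a}) :
    ∀ P : (∀ i, X i) → ℝ, (∀ s, 0 ≤ P s) → (∑ s : ∀ i, X i, P s = 1) →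
      ((∀ s : ∀ i, X i, (∃ t : ∀ i, X i, (∀ i ∈ I, t i = s i) ∧ 0 < P t) →
          ∃ a : A, OptS U P I s = {a} ∧ Opt U s = {a} ∧ OptS U P I s = Opt U s) ∧
        ((∀ s : ∀ i, X i, ∃ t : ∀ i, X i, (∀ i ∈ I, t i = s i) ∧ 0 < P t) →
          StochSufficient U P I)) := by
  intro P hP hsum
  have main : ∀ s : ∀ i, X i, (∃ t : ∀ i, X i, (∀ i ∈ I, t i = s i) ∧ 0 < P t) →
      ∃ a : A, OptS U P I s = {a} ∧ Opt U s = {a} ∧ OptS U P I s = Opt U s := by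
    intro s ⟨t0, ht0I, ht0P⟩
    obtain ⟨a, ha⟩ := hsing s
    have hOpts : Opt U s = {a} := ha s (fun i _ => rfl)
    have key : ∀ b, ∀ t : ∀ i, X i, (∀ i ∈ I, t i = s i) → U b t ≤ U a t := by
      intro b t ht
      have haOpt : a ∈ Opt U t := by rw [ha t ht]; rfl
      exact haOpt b
    have hle : ∀ b, condEU U P I s b ≤ condEU U P I s a := by
      intro b
      apply Finset.sum_le_sum
      intro t ht
      exact mul_le_mul_of_nonneg_left (key b t (by simpa using (Finset.mem_filter.mp ht).2)) (hP t)
    have hstrict : ∀ b, b ≠ a → condEU U P I s b < condEU U P I s a := by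
      intro b hb
      apply Finset.sum_lt_sum
      · intro t ht
        exact mul_le_mul_of_nonneg_left (key b t (by simpa using (Finset.mem_filter.mp ht).2)) (hP t)
      · refine ⟨t0, Finset.mem_filter.mpr ⟨Finset.mem_univ _, ht0I⟩, ?_⟩
        have hub : U b t0 < U a t0 := by
          rcases lt_or_eq_of_le (key b t0 ht0I) with h | h
          · exact h
          · exfalso
            apply hb
            have hbOpt : b ∈ Opt U t0 := by
              intro c
              calc U c t0 ≤ U a t0 := key c t0 ht0I
              _ = U b t0 := h.symm
            rw [ha t0 ht0I] at hbOpt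
            exact hbOpt
        exact mul_lt_mul_of_pos_left hub ht0P
    have hOptS : OptS U P I s = {a} := by
      ext b
      constructor
      · intro hbOptS
        by_contra hb
        exact absurd (hbOptS a) (not_le.mpr (hstrict b hb))
      · intro hb
        rw [Set.mem_singleton_iff] at hb
        subst hb
        exact hle
    exact ⟨a, hOptS, hOpts, by rw [hOptS, hOpts]⟩
  refine ⟨main, fun h s => ?_⟩
  obtain ⟨a, h1, h2, h3⟩ := main s (h s)
  exact h3
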